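/- The TILES state ρ = (1/4)(I₉ − Σ_{i=0}^{4} |ψ_i⟩⟨ψ_i|) is entangled: it is not a convex combination of product states σ_A ⊗ σ_B. -/

import Mathlib

open Matrix ComplexOrder

/-- Standard basis vector `|i⟩` of `ℂ³`. -/
noncomputable def e (i : Fin 3) : Fin 3 → ℂ := Pi.single i 1

/-- Tensor product of two vectors of `ℂ³`, as a vector of `ℂ³ ⊗ ℂ³ ≅ ℂ⁹`. -/
def tens (a b : Fin 3 → ℂ) : Fin 3 × Fin 3 → ℂ := fun p => a p.1 * b p.2

/-- The five TILES vectors in `ℂ³ ⊗ ℂ³`. -/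
noncomputable def tiles : Fin 5 → (Fin 3 × Fin 3 → ℂ)
  | 0 => (1 / Real.sqrt 2 : ℝ) • tens (e 0) (e 0 - e 1)
  | 1 => (1 / Real.sqrt 2 : ℝ) • tens (e 0 - e 1) (e 2)
  | 2 => (1 / Real.sqrt 2 : ℝ) • tens (e 2) (e 1 - e 2)
  | 3 => (1 / Real.sqrt 2 : ℝ) • tens (e 1 - e 2) (e 0)
  | 4 => (1 / 3 : ℝ) • tens (e 0 + e 1 + e 2) (e 0 + e 1 + e 2)

/-- The TILES state `ρ = (1/4)(I₉ − Σᵢ |ψᵢ⟩⟨ψᵢ|)`. -/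
noncomputable def tilesState : Matrix (Fin 3 × Fin 3) (Fin 3 × Fin 3) ℂ :=
  (1 / 4 : ℂ) •
    (1 - ∑ i : Fin 5, Matrix.vecMulVec (tiles i) (fun q => (starRingEnd ℂ) (tiles i q)))

noncomputable def aV : Fin 5 → Fin 3 → ℂ :=
  ![e 0, e 0 - e 1, e 2, e 1 - e 2, e 0 + e 1 + e 2]
noncomputable def bV : Fin 5 → Fin 3 → ℂ :=
  ![e 0 - e 1, e 2, e 1 - e 2, e 0, e 0 + e 1 + e 2]
noncomputable def cV : Fin 5 → ℝ :=
  ![1/Real.sqrt 2, 1/Real.sqrt 2, 1/Real.sqrt 2, 1/Real.sqrt 2, 1/3]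

lemma tiles_eq (i : Fin 5) : tiles i = cV i • tens (aV i) (bV i) := by
  fin_cases i <;> rfl

lemma cV_pos (i : Fin 5) : 0 < cV i := by
  fin_cases i <;> simp [cV] <;> positivity

lemma dot_tens (a b a' b' : Fin 3 → ℂ) :
    star (tens a b) ⬝ᵥ tens a' b' = (star a ⬝ᵥ a') * (star b ⬝ᵥ b') := by
  simp only [dotProduct, tens, Pi.star_apply, Fintype.sum_prod_type, star_mul']
  rw [Finset.sum_mul_sum]
  congr 1; ext p; congr 1; ext q; ring

lemma orth (i j : Fin 5) : star (tiles i) ⬝ᵥ tiles j = if i = j then 1 else 0 := by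
  have h2 : (Real.sqrt 2 : ℝ) * Real.sqrt 2 = 2 := Real.mul_self_sqrt (by norm_num)
  fin_cases i <;> fin_cases j <;>
    simp [tiles, dotProduct, tens, e, Fintype.sum_prod_type, Fin.sum_univ_three,
      Pi.single_apply, Complex.real_smul, Complex.ext_iff] <;>
    field_simp <;> nlinarith [h2, Real.sqrt_nonneg 2]

lemma vmv_mulVec {n : Type*} [Fintype n] (u v x : n → ℂ) :
    Matrix.vecMulVec u v *ᵥ x = (v ⬝ᵥ x) • u := by
  ext i
  simp [Matrix.vecMulVec, Matrix.mulVec, dotProduct, Finset.mul_sum, mul_comm, mul_left_comm,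
    mul_assoc]

lemma sum_mulVec {n m ι : Type*} [Fintype n] (s : Finset ι) (M : ι → Matrix m n ℂ)
    (x : n → ℂ) : (∑ i ∈ s, M i) *ᵥ x = ∑ i ∈ s, (M i) *ᵥ x := by
  ext j
  simp only [Matrix.mulVec, dotProduct, Finset.sum_apply, Matrix.sum_apply, Finset.sum_mul]
  rw [Finset.sum_comm]

lemma dotProduct_sum' {n ι : Type*} [Fintype n] (s : Finset ι) (a : n → ℂ) (v : ι → n → ℂ) :
    a ⬝ᵥ (∑ i ∈ s, v i) = ∑ i ∈ s, a ⬝ᵥ v i := by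
  simp only [dotProduct, Finset.mul_sum, Finset.sum_apply]
  rw [Finset.sum_comm]

lemma quad_rho (i : Fin 5) : star (tiles i) ⬝ᵥ tilesState *ᵥ tiles i = 0 := by
  have hs : ∀ j : Fin 5, (fun q => (starRingEnd ℂ) (tiles j q)) = star (tiles j) := fun j => rfl
  rw [tilesState, Matrix.smul_mulVec, Matrix.sub_mulVec, Matrix.one_mulVec, _root_.sum_mulVec]
  simp only [hs, vmv_mulVec]
  rw [dotProduct_smul, dotProduct_sub, dotProduct_sum']
  simp only [dotProduct_smul, smul_eq_mul, orth]
  have h1 : ∀ j : Fin 5, (if j = i then (1:ℂ) else 0) * (if i = j then 1 else 0)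
      = if i = j then 1 else 0 := by
    intro j; by_cases h : i = j
    · simp [h]
    · simp [h, Ne.symm h]
  rw [Finset.sum_congr rfl fun j _ => h1 j, Finset.sum_ite_eq]
  simp

open Kronecker in
lemma kron_mulVec (A B : Matrix (Fin 3) (Fin 3) ℂ) (a b : Fin 3 → ℂ) :
    (A ⊗ₖ B) *ᵥ tens a b = tens (A *ᵥ a) (B *ᵥ b) := by
  ext ⟨p, q⟩
  simp only [Matrix.mulVec, dotProduct, tens, Matrix.kroneckerMap_apply, Fintype.sum_prod_type]
  rw [Finset.sum_mul_sum]
  apply Finset.sum_congr rfl; intro r _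
  apply Finset.sum_congr rfl; intro s _
  ring

open Kronecker in
lemma quad_kron (A B : Matrix (Fin 3) (Fin 3) ℂ) (a b : Fin 3 → ℂ) :
    star (tens a b) ⬝ᵥ (A ⊗ₖ B) *ᵥ tens a b
      = (star a ⬝ᵥ A *ᵥ a) * (star b ⬝ᵥ B *ᵥ b) := by
  rw [kron_mulVec, dot_tens]

lemma quad_smul (M : Matrix (Fin 3 × Fin 3) (Fin 3 × Fin 3) ℂ) (r : ℝ) (x : Fin 3 × Fin 3 → ℂ) :
    star (r • x) ⬝ᵥ M *ᵥ (r • x) = ((r : ℂ))^2 * (star x ⬝ᵥ M *ᵥ x) := by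
  have : star (r • x) = r • star x := by
    ext p; simp [Complex.real_smul]
  rw [this, Matrix.mulVec_smul, smul_dotProduct, dotProduct_smul]
  simp [Complex.real_smul]
  ring

lemma kill3 (M : Matrix (Fin 3) (Fin 3) ℂ) (u v w : Fin 3 → ℂ)
    (hdet : (Matrix.of ![u, v, w]).det ≠ 0)
    (hu : M *ᵥ u = 0) (hv : M *ᵥ v = 0) (hw : M *ᵥ w = 0) : M = 0 := by
  set A : Matrix (Fin 3) (Fin 3) ℂ := (Matrix.of ![u, v, w])ᵀ with hA
  have hdetA : IsUnit A.det := by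
    rw [hA, Matrix.det_transpose]
    exact isUnit_iff_ne_zero.mpr hdet
  have hMA : M * A = 0 := by
    ext i j
    rw [Matrix.mul_apply]
    have h : ∀ x, A x j = ![u, v, w] j x := fun x => rfl
    simp only [h]
    fin_cases j
    · simpa [Matrix.mulVec, dotProduct] using congrFun hu i
    · simpa [Matrix.mulVec, dotProduct] using congrFun hv i
    · simpa [Matrix.mulVec, dotProduct] using congrFun hw i
  calc M = M * (A * A⁻¹) := by rw [Matrix.mul_nonsing_inv A hdetA, mul_one]
  _ = (M * A) * A⁻¹ := by rw [mul_assoc]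
  _ = 0 := by rw [hMA, zero_mul]

def aZ : Fin 5 → Fin 3 → ℤ := ![![1,0,0], ![1,-1,0], ![0,0,1], ![0,1,-1], ![1,1,1]]
def bZ : Fin 5 → Fin 3 → ℤ := ![![1,-1,0], ![0,0,1], ![0,1,-1], ![1,0,0], ![1,1,1]]

lemma aV_cast (i : Fin 5) (k : Fin 3) : aV i k = ((aZ i k : ℤ) : ℂ) := by
  fin_cases i <;> fin_cases k <;> norm_num [aV, aZ, e, Pi.single_apply, Fin.ext_iff]

lemma bV_cast (i : Fin 5) (k : Fin 3) : bV i k = ((bZ i k : ℤ) : ℂ) := by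
  fin_cases i <;> fin_cases k <;> norm_num [bV, bZ, e, Pi.single_apply, Fin.ext_iff]

def d3 {R : Type*} [CommRing R] (u v w : Fin 3 → R) : R :=
  u 0 * (v 1 * w 2 - v 2 * w 1) - u 1 * (v 0 * w 2 - v 2 * w 0) + u 2 * (v 0 * w 1 - v 1 * w 0)

lemma det_rows (u v w : Fin 3 → ℂ) : (Matrix.of ![u, v, w]).det = d3 u v w := by
  rw [Matrix.det_fin_three]
  simp [d3, Matrix.of_apply]
  ring

lemma d3aZ : ∀ i j k : Fin 5, i < j → j < k → d3 (aZ i) (aZ j) (aZ k) ≠ 0 := by decide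

lemma d3bZ : ∀ i j k : Fin 5, i < j → j < k → d3 (bZ i) (bZ j) (bZ k) ≠ 0 := by decide

lemma detA (i j k : Fin 5) (hij : i < j) (hjk : j < k) :
    (Matrix.of ![aV i, aV j, aV k]).det ≠ 0 := by
  rw [det_rows]
  have : d3 (aV i) (aV j) (aV k) = ((d3 (aZ i) (aZ j) (aZ k) : ℤ) : ℂ) := by
    simp [d3, aV_cast]
  rw [this]
  exact_mod_cast d3aZ i j k hij hjk

lemma detB (i j k : Fin 5) (hij : i < j) (hjk : j < k) :
    (Matrix.of ![bV i, bV j, bV k]).det ≠ 0 := by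
  rw [det_rows]
  have : d3 (bV i) (bV j) (bV k) = ((d3 (bZ i) (bZ j) (bZ k) : ℤ) : ℂ) := by
    simp [d3, bV_cast]
  rw [this]
  exact_mod_cast d3bZ i j k hij hjk

lemma pigeon : ∀ f : Fin 5 → Bool, ∃ i j k : Fin 5, i < j ∧ j < k ∧ f i = f j ∧ f j = f k := by
  decide

open Kronecker in
/-- The TILES state is entangled: it admits no separable decomposition. -/
theorem tilesState_entangled :
    ¬ ∃ (m : ℕ) (p : Fin m → ℝ) (σA σB : Fin m → Matrix (Fin 3) (Fin 3) ℂ),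
      (∀ j, 0 < p j) ∧ (∑ j, p j) = 1 ∧
      (∀ j, (σA j).PosSemidef ∧ (σA j).trace = 1) ∧
      (∀ j, (σB j).PosSemidef ∧ (σB j).trace = 1) ∧
      tilesState = ∑ j, ((p j : ℂ) • (σA j ⊗ₖ σB j)) := by
  rintro ⟨m, p, σA, σB, hp, hsum, hA, hB, hρ⟩
  classical
  have hm : 0 < m := by
    rcases Nat.eq_zero_or_pos m with h | h
    · subst h; simp at hsum
    · exact h
  set j0 : Fin m := ⟨0, hm⟩
  -- quadratic forms
  set α : Fin 5 → Fin m → ℂ := fun i j => star (aV i) ⬝ᵥ (σA j) *ᵥ (aV i) with hα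
  set β : Fin 5 → Fin m → ℂ := fun i j => star (bV i) ⬝ᵥ (σB j) *ᵥ (bV i) with hβ
  have hαβ : ∀ i : Fin 5, α i j0 * β i j0 = 0 := by
    intro i
    -- expand quad_rho via the decomposition
    have h0 : star (tiles i) ⬝ᵥ tilesState *ᵥ tiles i = 0 := quad_rho i
    rw [hρ, _root_.sum_mulVec, dotProduct_sum'] at h0
    have hterm : ∀ j : Fin m, star (tiles i) ⬝ᵥ ((p j : ℂ) • (σA j ⊗ₖ σB j)) *ᵥ tiles i
        = (p j : ℂ) * (((cV i : ℂ))^2 * (α i j * β i j)) := by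
      intro j
      rw [Matrix.smul_mulVec, dotProduct_smul, smul_eq_mul]
      congr 1
      rw [tiles_eq i, quad_smul, quad_kron]
    rw [Finset.sum_congr rfl (fun j _ => hterm j)] at h0
    -- each term is nonnegative
    have hnn : ∀ j : Fin m, (0:ℂ) ≤ (p j : ℂ) * (((cV i : ℂ))^2 * (α i j * β i j)) := by
      intro j
      have h1 : (0:ℂ) ≤ (p j : ℂ) := by exact_mod_cast (hp j).le
      have h2 : (0:ℂ) ≤ ((cV i : ℂ))^2 := by
        exact_mod_cast pow_nonneg (cV_pos i).le 2
      have h3 : (0:ℂ) ≤ α i j := (hA j).1.dotProduct_mulVec_nonneg (aV i)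
      have h4 : (0:ℂ) ≤ β i j := (hB j).1.dotProduct_mulVec_nonneg (bV i)
      exact mul_nonneg h1 (mul_nonneg h2 (mul_nonneg h3 h4))
    have hz := (Finset.sum_eq_zero_iff_of_nonneg (fun j _ => hnn j)).mp h0 j0
      (Finset.mem_univ _)
    have hpne : (p j0 : ℂ) ≠ 0 := by
      exact_mod_cast (hp j0).ne'
    have hcne : ((cV i : ℂ))^2 ≠ 0 := by
      have := (cV_pos i).ne'
      positivity
    rcases mul_eq_zero.mp hz with h | h
    · exact absurd h hpne
    rcases mul_eq_zero.mp h with h | h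
    · exact absurd h hcne
    · exact h
  -- for each i, σA kills aV i or σB kills bV i
  have hkill : ∀ i : Fin 5, (σA j0) *ᵥ (aV i) = 0 ∨ (σB j0) *ᵥ (bV i) = 0 := by
    intro i
    rcases mul_eq_zero.mp (hαβ i) with h | h
    · exact Or.inl (((hA j0).1.dotProduct_mulVec_zero_iff (aV i)).mp h)
    · exact Or.inr (((hB j0).1.dotProduct_mulVec_zero_iff (bV i)).mp h)
  set f : Fin 5 → Bool := fun i => if (σA j0) *ᵥ (aV i) = 0 then true else false with hf
  obtain ⟨i, j, k, hij, hjk, hfij, hfjk⟩ := pigeon f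
  have hfspec : ∀ x : Fin 5, (f x = true → (σA j0) *ᵥ (aV x) = 0)
      ∧ (f x = false → (σB j0) *ᵥ (bV x) = 0) := by
    intro x
    constructor
    · intro hx
      by_contra h
      simp [hf, h] at hx
    · intro hx
      rcases hkill x with h | h
      · simp [hf, h] at hx
      · exact h
  cases hfi : f i with
  | true =>
    have hMA : σA j0 = 0 :=
      kill3 _ _ _ _ (detA i j k hij hjk)
        ((hfspec i).1 hfi) ((hfspec j).1 (hfij ▸ hfi)) ((hfspec k).1 ((hfjk ▸ hfij) ▸ hfi))
    have := (hA j0).2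
    rw [hMA] at this
    simp at this
  | false =>
    have hMB : σB j0 = 0 :=
      kill3 _ _ _ _ (detB i j k hij hjk)
        ((hfspec i).2 hfi) ((hfspec j).2 (hfij ▸ hfi)) ((hfspec k).2 ((hfjk ▸ hfij) ▸ hfi))
    have := (hB j0).2
    rw [hMB] at this
    simp at this
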